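/- Let k be a field of characteristic zero and n ≥ 1. If a matrix X ∈ M_n(k) satisfies X*J_n − J_n*X = J_n^2, then the unital k-subalgebra generated by X and J_n equals the unital k-subalgebra generated by X⁰ and J_n: Algebra.adjoin k {X, J_n} = Algebra.adjoin k {X⁰, J_n}. In particular, the image algebra of an n-dimensional representation of the Jordanian algebra in which y acts by a full Jordan block does not depend on the choice of the representation. -/
import Mathlib


/-- The `n × n` nilpotent Jordan block with ones on the subdiagonal:
`(J_n)_{i,j} = 1` iff `i = j + 1`. -/
def jordanBlock (k : Type*) [Field k] (n : ℕ) : Matrix (Fin n) (Fin n) k :=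
  Matrix.of fun i j => if (i : ℕ) = (j : ℕ) + 1 then 1 else 0

/-- The matrix `X⁰` whose only nonzero entries are `(X⁰)_{j+1,j} = j` for `j = 0,…,n-2`. -/
def Xzero (k : Type*) [Field k] (n : ℕ) : Matrix (Fin n) (Fin n) k :=
  Matrix.of fun i j => if (i : ℕ) = (j : ℕ) + 1 then ((j : ℕ) : k) else 0

section Aux

variable {k : Type*} [Field k] {n : ℕ}

lemma mul_jordan_apply (A : Matrix (Fin n) (Fin n) k) (i j : Fin n) :
    (A * jordanBlock k n) i j =
      if h : (j : ℕ) + 1 < n then A i ⟨(j : ℕ) + 1, h⟩ else 0 := by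
  simp only [Matrix.mul_apply, jordanBlock, Matrix.of_apply]
  split_ifs with h
  · rw [Finset.sum_eq_single (⟨(j : ℕ) + 1, h⟩ : Fin n)]
    · simp
    · intro b _ hb
      rw [if_neg, mul_zero]
      intro hb'; exact hb (Fin.ext hb')
    · simp
  · apply Finset.sum_eq_zero
    intro l _
    rw [if_neg, mul_zero]
    intro hl
    exact h (hl ▸ l.isLt)

lemma jordan_mul_apply (A : Matrix (Fin n) (Fin n) k) (i j : Fin n) :
    (jordanBlock k n * A) i j =
      if h : 0 < (i : ℕ) then A ⟨(i : ℕ) - 1, lt_of_le_of_lt (Nat.sub_le _ _) i.isLt⟩ j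
      else 0 := by
  simp only [Matrix.mul_apply, jordanBlock, Matrix.of_apply]
  split_ifs with h
  · rw [Finset.sum_eq_single (⟨(i : ℕ) - 1, lt_of_le_of_lt (Nat.sub_le _ _) i.isLt⟩ : Fin n)]
    · rw [if_pos, one_mul]
      exact show (i : ℕ) = (i : ℕ) - 1 + 1 by omega
    · intro b _ hb
      rw [if_neg, zero_mul]
      intro hb'; apply hb; apply Fin.ext; simp; omega
    · simp
  · apply Finset.sum_eq_zero
    intro l _
    rw [if_neg, zero_mul]
    omega

lemma jordan_pow_apply (m : ℕ) (i j : Fin n) :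
    ((jordanBlock k n) ^ m) i j = if (i : ℕ) = (j : ℕ) + m then 1 else 0 := by
  induction m generalizing j with
  | zero => simp [Matrix.one_apply, Fin.ext_iff, eq_comm]
  | succ m ih =>
    rw [pow_succ, mul_jordan_apply]
    have hi := i.isLt
    by_cases h : (j : ℕ) + 1 < n
    · rw [dif_pos h, ih]
      show (if (i : ℕ) = (j : ℕ) + 1 + m then (1:k) else 0) = _
      rw [show (j : ℕ) + 1 + m = (j : ℕ) + (m + 1) by omega]
    · rw [dif_neg h, if_neg (by omega)]

lemma comm_jordan_key (hn : 1 ≤ n) (D : Matrix (Fin n) (Fin n) k)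
    (hD : D * jordanBlock k n = jordanBlock k n * D) (hn0 : 0 < n) :
    ∀ (m : ℕ) (i j : Fin n), (j : ℕ) = m →
      D i j = if h : (j : ℕ) ≤ (i : ℕ) then
        D ⟨(i : ℕ) - (j : ℕ), lt_of_le_of_lt (Nat.sub_le _ _) i.isLt⟩ ⟨0, hn0⟩ else 0 := by
    intro m
    induction m with
    | zero =>
      intro i j hj
      rw [dif_pos (by omega)]
      congr 1 <;> apply Fin.ext <;> simp <;> omega
    | succ m ihm =>
      intro i j hj
      have hmn : m < n := by omega
      have hm1 : m + 1 < n := by omega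
      have heq := congrArg (fun M => M i (⟨m, hmn⟩ : Fin n)) hD
      simp only [mul_jordan_apply, jordan_mul_apply, Fin.val_mk] at heq
      rw [dif_pos hm1] at heq
      have hj' : j = ⟨m + 1, hm1⟩ := Fin.ext (by simpa using hj)
      rw [hj']
      rw [heq]
      by_cases h1 : 0 < (i : ℕ)
      · rw [dif_pos h1]
        rw [ihm ⟨(i : ℕ) - 1, _⟩ ⟨m, hmn⟩ rfl]
        show (if _ : m ≤ (i : ℕ) - 1 then _ else _) = (if _ : m + 1 ≤ (i : ℕ) then _ else _)
        by_cases h2 : m ≤ (i : ℕ) - 1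
        · rw [dif_pos h2, dif_pos (show m + 1 ≤ (i : ℕ) by omega)]
          congr 1
          exact Fin.ext (show (i : ℕ) - 1 - m = (i : ℕ) - (m + 1) by omega)
        · rw [dif_neg h2, dif_neg (show ¬ m + 1 ≤ (i : ℕ) by omega)]
      · rw [dif_neg h1, dif_neg (show ¬ m + 1 ≤ (i : ℕ) by omega)]

lemma comm_jordan_mem (hn : 1 ≤ n) (D : Matrix (Fin n) (Fin n) k)
    (hD : D * jordanBlock k n = jordanBlock k n * D) :
    D ∈ Algebra.adjoin k {jordanBlock k n} := by
  have hn0 : 0 < n := hn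
  have key := comm_jordan_key hn D hD hn0
  have hrep : D = ∑ m : Fin n, D m ⟨0, hn0⟩ • (jordanBlock k n) ^ (m : ℕ) := by
    ext i j
    rw [Matrix.sum_apply]
    simp only [Matrix.smul_apply, jordan_pow_apply, smul_eq_mul]
    rw [key (j : ℕ) i j rfl]
    split_ifs with h
    · rw [Finset.sum_eq_single (⟨(i : ℕ) - (j : ℕ),
        lt_of_le_of_lt (Nat.sub_le _ _) i.isLt⟩ : Fin n)]
      · rw [if_pos (show (i:ℕ) = (j:ℕ) + ((i:ℕ) - (j:ℕ)) by omega), mul_one]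
      · intro b _ hb
        rw [if_neg, mul_zero]
        intro hb'; apply hb; apply Fin.ext; simp; omega
      · simp
    · symm
      apply Finset.sum_eq_zero
      intro l _
      rw [if_neg (by omega), mul_zero]
  rw [hrep]
  apply Subalgebra.sum_mem
  intro m _
  apply Subalgebra.smul_mem
  apply Subalgebra.pow_mem
  exact Algebra.subset_adjoin (Set.mem_singleton _)

lemma Xzero_rel (hn : 1 ≤ n) :
    Xzero k n * jordanBlock k n - jordanBlock k n * Xzero k n = (jordanBlock k n) ^ 2 := by
  ext i j
  rw [Matrix.sub_apply, mul_jordan_apply, jordan_mul_apply, jordan_pow_apply]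
  simp only [Xzero, Matrix.of_apply]
  have hi := i.isLt
  have hj := j.isLt
  split_ifs <;> simp_all <;> first | omega | (push_cast; ring) | skip
  all_goals omega

end Aux

/-- Let `k` be a field of characteristic zero and `n ≥ 1`.  If a matrix
`X ∈ M_n(k)` satisfies `X*J_n - J_n*X = J_n^2`, then the unital `k`-subalgebra generated by
`X` and `J_n` equals the one generated by `X⁰` and `J_n`.  In particular, the image algebra of
an `n`-dimensional representation of the Jordanian algebra in which `y` acts by a full Jordan
block does not depend on the choice of the representation. -/
theorem jordanian_full_block_image_independent (k : Type*) [Field k] [CharZero k]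
    (n : ℕ) (hn : 1 ≤ n) (X : Matrix (Fin n) (Fin n) k)
    (h : X * jordanBlock k n - jordanBlock k n * X = (jordanBlock k n) ^ 2) :
    Algebra.adjoin k {X, jordanBlock k n} =
      Algebra.adjoin k {Xzero k n, jordanBlock k n} := by
  set J := jordanBlock k n with hJ
  set D := X - Xzero k n with hDdef
  have hcomm : D * J = J * D := by
    have expand : D * J - J * D = (X * J - J * X) - (Xzero k n * J - J * Xzero k n) := by
      rw [hDdef]; noncomm_ring
    have hzero : D * J - J * D = 0 := by
      rw [expand, h, hJ, Xzero_rel hn, sub_self]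
    exact sub_eq_zero.mp hzero
  have hDmem : D ∈ Algebra.adjoin k ({J} : Set (Matrix (Fin n) (Fin n) k)) :=
    comm_jordan_mem hn D hcomm
  have hmono1 : Algebra.adjoin k ({J} : Set (Matrix (Fin n) (Fin n) k)) ≤
      Algebra.adjoin k {X, J} := Algebra.adjoin_mono (by simp)
  have hmono2 : Algebra.adjoin k ({J} : Set (Matrix (Fin n) (Fin n) k)) ≤
      Algebra.adjoin k {Xzero k n, J} := Algebra.adjoin_mono (by simp)
  have hXmem : X ∈ Algebra.adjoin k {Xzero k n, J} := by
    have hX : X = D + Xzero k n := by rw [hDdef]; abel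
    rw [hX]
    exact add_mem (hmono2 hDmem) (Algebra.subset_adjoin (Set.mem_insert _ _))
  have hX0mem : Xzero k n ∈ Algebra.adjoin k {X, J} := by
    have hX0 : Xzero k n = X - D := by rw [hDdef]; abel
    rw [hX0]
    exact sub_mem (Algebra.subset_adjoin (Set.mem_insert _ _)) (hmono1 hDmem)
  apply le_antisymm
  · apply Algebra.adjoin_le
    rintro x (rfl | rfl)
    · exact hXmem
    · exact Algebra.subset_adjoin (Set.mem_insert_of_mem _ rfl)
  · apply Algebra.adjoin_le
    rintro x (rfl | rfl)
    · exact hX0mem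
    · exact Algebra.subset_adjoin (Set.mem_insert_of_mem _ rfl)
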